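/- Let d ≥ 3 and let φ : U_d → GL_m(ℂ) be a homomorphism with m < d from the group of unipotent upper triangular d×d integer matrices, such that φ(E_{ij}) is unipotent for all i < j. Then φ(E_{1d}) = id. -/

import Mathlib

/-- The elementary matrix `E i j` (for `i ≠ j`) in `SL_d(ℤ)`. -/
def Emat (d : ℕ) (i j : Fin d) (h : i ≠ j) : Matrix.SpecialLinearGroup (Fin d) ℤ :=
  ⟨Matrix.transvection i j 1, Matrix.det_transvection_of_ne i j h 1⟩

/-- The subgroup `U_d ≤ SL_d(ℤ)` of unipotent upper triangular matrices, i.e. the subgroup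
generated by the elementary matrices `E i j` with `i < j`. -/
def unipotentUpper (d : ℕ) : Subgroup (Matrix.SpecialLinearGroup (Fin d) ℤ) :=
  Subgroup.closure { A | ∃ (i j : Fin d) (h : i < j), A = Emat d i j h.ne }

/-- The elementary matrix `E i j` (for `i < j`) as an element of `U_d`. -/
def EU (d : ℕ) (i j : Fin d) (h : i < j) : unipotentUpper d :=
  ⟨Emat d i j h.ne, Subgroup.subset_closure ⟨i, j, h, rfl⟩⟩


open Module


theorem nilp_ker_ne_bot {F V : Type} [Field F] [AddCommGroup V] [Module F V] [Nontrivial V]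
    (f : Module.End F V) (hf : IsNilpotent f) : LinearMap.ker f ≠ ⊥ := by
  intro hbot
  have hinj : Function.Injective f := LinearMap.ker_eq_bot.mp hbot
  obtain ⟨r, hr⟩ := hf
  have hinjr : ∀ r : ℕ, Function.Injective (f ^ r : Module.End F V) := by
    intro r
    induction r with
    | zero => rw [pow_zero]; exact fun x y h => h
    | succ r ihr =>
      rw [pow_succ]
      exact fun x y hxy => hinj (ihr hxy)
  obtain ⟨v, hv⟩ := exists_ne (0 : V)
  exact hv (hinjr r (by simp [hr]))

theorem commFix (F : Type) [Field F] : ∀ (q : ℕ) (V : Type) [AddCommGroup V] [Module F V]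
    [FiniteDimensional F V] [Nontrivial V] (T : Fin q → Module.End F V),
    (∀ i j : Fin q, ∀ v : V, T i (T j v) = T j (T i v)) → (∀ i, IsNilpotent (T i)) →
    ∃ v : V, v ≠ 0 ∧ ∀ i, T i v = 0 := by
  intro q
  induction q with
  | zero =>
    intro V _ _ _ _ T _ _
    obtain ⟨v, hv⟩ := exists_ne (0 : V)
    exact ⟨v, hv, fun i => i.elim0⟩
  | succ q ih =>
    intro V _ _ _ _ T hcomm hnil
    set K := LinearMap.ker (T 0) with hK
    have hKne : K ≠ ⊥ := nilp_ker_ne_bot (T 0) (hnil 0)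
    have : Nontrivial K := Submodule.nontrivial_iff_ne_bot.mpr hKne
    have hmaps : ∀ i : Fin q, Set.MapsTo (T i.succ) K K := by
      intro i x hx
      have : T 0 (T i.succ x) = 0 := by
        rw [hcomm 0 i.succ x, LinearMap.mem_ker.mp hx, map_zero]
      exact LinearMap.mem_ker.mpr this
    obtain ⟨v, hv0, hv⟩ := ih K (fun i => (T i.succ).restrict (hmaps i))
      (by
        intro i j x
        apply Subtype.ext
        exact hcomm i.succ j.succ x)
      (fun i => Module.End.isNilpotent.restrict (hmaps i) (hnil i.succ))
    refine ⟨(v : V), by exact fun h => hv0 (Subtype.ext h), ?_⟩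
    intro i
    refine Fin.cases ?_ ?_ i
    · exact v.2
    · intro i
      have := hv i
      exact congrArg Subtype.val this


theorem core (F : Type) [Field F] : ∀ (n : ℕ) (V : Type) [AddCommGroup V] [Module F V]
    [FiniteDimensional F V] (ξA ξB : Fin n → Module.End F V) (a b : Fin n → V) (e : V),
    e ≠ 0 →
    (∀ k l x, ξA k (ξA l x) = ξA l (ξA k x)) →
    (∀ k l x, ξB k (ξB l x) = ξB l (ξB k x)) →
    (∀ k l x, ξA k (ξB l x) = ξB l (ξA k x)) →
    (∀ k, ξA k e = 0) → (∀ k, ξB k e = 0) →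
    (∀ k l, ξA k (a l) = ξA l (a k)) →
    (∀ k l, ξB k (b l) = ξB l (b k)) →
    (∀ k l, ξA k (b l) = ξB l (a k) + (if k = l then e else 0)) →
    n + 1 ≤ Module.finrank F V := by
  intro n
  induction n with
  | zero =>
    intro V _ _ _ ξA ξB a b e he _ _ _ _ _ _ _ _
    have : Nontrivial V := nontrivial_of_ne e 0 he
    exact Module.finrank_pos_iff.mpr this
  | succ n ih =>
    intro V _ _ _ ξA ξB a b e he hAA hBB hAB hAe hBe haa hbb hab
    by_cases hli : LinearIndependent F (Fin.snoc a e : Fin (n + 2) → V)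
    · simpa using hli.fintype_card_le_finrank
    · obtain ⟨g, hg, i0, hi0⟩ := Fintype.not_linearIndependent_iff.mp hli
      set γ := g (Fin.last (n + 1)) with hγdef
      set c : Fin (n + 1) → F := fun k => g k.castSucc with hcdef
      have hdep : ∑ k, c k • a k + γ • e = 0 := by
        rw [Fin.sum_univ_castSucc] at hg
        simpa [hcdef, hγdef] using hg
      have hcj : ∃ j, c j ≠ 0 := by
        by_contra hc
        push_neg at hc
        have hγ0 : γ ≠ 0 := by
          rcases Fin.lastCases (motive := fun i => g i ≠ 0 → γ ≠ 0) (fun h => h)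
            (fun k h => absurd (hc k) h) i0 hi0 with h
          exact h
        have : γ • e = 0 := by simpa [hc] using hdep
        exact he ((smul_eq_zero.mp this).resolve_left hγ0)
      obtain ⟨j₀, hj₀⟩ := hcj
      set c' : Fin (n + 1) → F := fun l => c l / c j₀ with hc'def
      have hc'j₀ : c' j₀ = 1 := div_self hj₀
      set η : Module.End F V := ∑ l, c' l • ξA l with hηdef
      set s : V := ∑ l, c' l • a l with hsdef
      have hs : s = (-((c j₀)⁻¹ * γ)) • e := by
        have h2 := congrArg (fun v => (c j₀)⁻¹ • v) hdep
        simp only [smul_add, Finset.smul_sum, smul_smul, smul_zero] at h2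
        have hc'' : ∀ k, (c j₀)⁻¹ * c k = c' k := fun k => by rw [hc'def]; ring
        simp only [hc''] at h2
        rw [hsdef, neg_smul, eq_neg_iff_add_eq_zero]
        simpa using h2
      have hξAs : ∀ l, ξA l s = 0 := by
        intro l; rw [hs]; simp [hAe l]
      have hξBs : ∀ l, ξB l s = 0 := by
        intro l; rw [hs]; simp [hBe l]
      have hηapp : ∀ x, η x = ∑ k, c' k • ξA k x := by
        intro x; rw [hηdef]; simp [LinearMap.sum_apply]
      have hηa : ∀ l, η (a l) = 0 := by
        intro l
        rw [hηapp]
        calc ∑ k, c' k • ξA k (a l) = ∑ k, c' k • ξA l (a k) := by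
              refine Finset.sum_congr rfl fun k _ => by rw [haa k l]
          _ = ξA l s := by rw [hsdef, map_sum]; simp
          _ = 0 := hξAs l
      have hηb : ∀ l, η (b l) = c' l • e := by
        intro l
        rw [hηapp]
        have : ∀ k, c' k • ξA k (b l) = c' k • ξB l (a k) + if k = l then c' k • e else 0 := by
          intro k
          rw [hab k l, smul_add, smul_ite, smul_zero]
        rw [Finset.sum_congr rfl fun k _ => this k, Finset.sum_add_distrib,
          Finset.sum_ite_eq' Finset.univ l (fun k => c' k • e)]
        have : ∑ k, c' k • ξB l (a k) = ξB l s := by rw [hsdef, map_sum]; simp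
        simp [this, hξBs l]
      have hηe : η e = 0 := by
        rw [hηapp]; simp [hAe]
      set b' : Fin (n + 1) → V := fun l => b l - c' l • b j₀ with hb'def
      set ξB' : Fin (n + 1) → Module.End F V := fun l => ξB l - c' l • ξB j₀ with hξB'def
      have hξB'app : ∀ l x, ξB' l x = ξB l x - c' l • ξB j₀ x := by
        intro l x; rw [hξB'def]; simp
      have hηb' : ∀ l, η (b' l) = 0 := by
        intro l
        rw [hb'def]
        simp only [map_sub, map_smul, hηb, hc'j₀, one_smul, sub_self]
      have hηbj₀ : η (b j₀) = e := by rw [hηb, hc'j₀, one_smul]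
      set K' : Submodule F V := LinearMap.ker η with hK'def
      have haK : ∀ l, a l ∈ K' := fun l => LinearMap.mem_ker.mpr (hηa l)
      have hb'K : ∀ l, b' l ∈ K' := fun l => LinearMap.mem_ker.mpr (hηb' l)
      have heK : e ∈ K' := LinearMap.mem_ker.mpr hηe
      have hbj₀K : b j₀ ∉ K' := by
        rw [hK'def, LinearMap.mem_ker, hηbj₀]; exact he
      have hK'lt : K' < ⊤ := lt_top_iff_ne_top.mpr (fun h => hbj₀K (h ▸ Submodule.mem_top))
      have hrank : Module.finrank F K' < Module.finrank F V := Submodule.finrank_lt hK'lt.ne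
      -- commutation of η with the operators
      have hηA : ∀ l x, η (ξA l x) = ξA l (η x) := by
        intro l x
        rw [hηapp, hηapp, map_sum]
        refine Finset.sum_congr rfl fun k _ => by rw [hAA k l x, map_smul]
      have hηB : ∀ l x, η (ξB l x) = ξB l (η x) := by
        intro l x
        rw [hηapp, hηapp, map_sum]
        refine Finset.sum_congr rfl fun k _ => by rw [hAB k l x, map_smul]
      have hηB' : ∀ l x, η (ξB' l x) = ξB' l (η x) := by
        intro l x
        rw [hξB'app, hξB'app, map_sub, map_smul, hηB, hηB]
      have hmA : ∀ l, ∀ x ∈ K', ξA l x ∈ K' := by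
        intro l x hx
        rw [hK'def, LinearMap.mem_ker] at hx ⊢
        rw [hηA, hx, map_zero]
      have hmB : ∀ l, ∀ x ∈ K', ξB' l x ∈ K' := by
        intro l x hx
        rw [hK'def, LinearMap.mem_ker] at hx ⊢
        rw [hηB', hx, map_zero]
      -- V-level facts for the new system
      have hB'e : ∀ l, ξB' l e = 0 := by
        intro l; rw [hξB'app, hBe, hBe, smul_zero, sub_zero]
      have hB'B' : ∀ k l x, ξB' k (ξB' l x) = ξB' l (ξB' k x) := by
        intro k l x
        simp only [hξB'app, map_sub, map_smul]
        rw [hBB k l, hBB k j₀, hBB j₀ l]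
        module
      have hAB'pt : ∀ k l x, ξA k (ξB' l x) = ξB' l (ξA k x) := by
        intro k l x
        simp only [hξB'app, map_sub, map_smul, hAB]
      have hb'b' : ∀ k l, ξB' k (b' l) = ξB' l (b' k) := by
        intro k l
        simp only [hξB'app, hb'def, map_sub, map_smul]
        rw [hbb k l, hbb k j₀, hbb j₀ l]
        module
      have hab' : ∀ k l, k ≠ j₀ → ξA k (b' l) = ξB' l (a k) + if k = l then e else 0 := by
        intro k l hk
        simp only [hξB'app, hb'def, map_sub, map_smul, hab]
        rw [if_neg hk]
        module
      clear_value K' ξB' b' η c' c γ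
      clear hηapp hηa hηb hηe hηb' hηbj₀ hξB'app hηA hηB hηB' hdep hs hξAs hξBs
        hg hli hi0 hj₀ hc'j₀ hb'def hξB'def hK'def hcdef hγdef hc'def
      -- new system on K'
      set ι : Fin n → Fin (n + 1) := fun i => j₀.succAbove i with hιdef
      have hιne : ∀ i, ι i ≠ j₀ := fun i => Fin.succAbove_ne j₀ i
      have hιinj : ∀ i i' : Fin n, (ι i = ι i') ↔ i = i' :=
        fun i i' => Fin.succAbove_right_injective.eq_iff
      have key := ih K' (fun i => (ξA (ι i)).restrict (hmA (ι i)))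
        (fun i => (ξB' (ι i)).restrict (hmB (ι i)))
        (fun i => ⟨a (ι i), haK (ι i)⟩)
        (fun i => ⟨b' (ι i), hb'K (ι i)⟩)
        ⟨e, heK⟩
        (by intro h; exact he (congrArg Subtype.val h))
        (by intro k l x; apply Subtype.ext; simp only [LinearMap.restrict_apply]; exact hAA _ _ _)
        (by intro k l x; apply Subtype.ext; simp only [LinearMap.restrict_apply]; exact hB'B' _ _ _)
        (by intro k l x; apply Subtype.ext; simp only [LinearMap.restrict_apply]; exact hAB'pt _ _ _)
        (by intro k; apply Subtype.ext; simp only [LinearMap.restrict_apply]; exact hAe _)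
        (by intro k; apply Subtype.ext; simp only [LinearMap.restrict_apply]; exact hB'e _)
        (by intro k l; apply Subtype.ext; simp only [LinearMap.restrict_apply]; exact haa (ι k) (ι l))
        (by intro k l; apply Subtype.ext; simp only [LinearMap.restrict_apply]; exact hb'b' (ι k) (ι l))
        (by
          intro k l
          apply Subtype.ext
          simp only [LinearMap.restrict_apply, Submodule.coe_add, apply_ite (Subtype.val),
            ZeroMemClass.coe_zero]
          rw [hab' (ι k) (ι l) (hιne k)]
          simp only [hιinj])
      omega

open Matrix in
theorem trv_comm {d : ℕ} (i j k l : Fin d) (h1 : j ≠ k) (h2 : l ≠ i) :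
    transvection i j (1:ℤ) * transvection k l 1 = transvection k l 1 * transvection i j 1 := by
  simp only [transvection, Matrix.add_mul, Matrix.mul_add, Matrix.one_mul, Matrix.mul_one,
    Matrix.single_mul_single_of_ne _ _ _ _ h1, Matrix.single_mul_single_of_ne _ _ _ _ h2]
  abel

open Matrix in
theorem trv_comm3 {d : ℕ} (i j k : Fin d) (hjk : j ≠ k) (hik : i ≠ k) :
    transvection i j (1:ℤ) * transvection j k 1 =
      transvection i k 1 * transvection j k 1 * transvection i j 1 := by
  simp only [transvection, Matrix.add_mul, Matrix.mul_add, Matrix.one_mul, Matrix.mul_one,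
    Matrix.single_mul_single_of_ne _ _ _ _ hjk.symm, Matrix.single_mul_single_of_ne _ _ _ _ hik.symm,
    Matrix.single_mul_single_of_ne _ _ _ _ hik, Matrix.single_mul_single_same, one_mul, zero_mul,
    Matrix.zero_mul]
  abel

theorem EU_comm {d : ℕ} (i j k l : Fin d) (hij : i < j) (hkl : k < l) (h1 : j ≠ k) (h2 : l ≠ i) :
    EU d i j hij * EU d k l hkl = EU d k l hkl * EU d i j hij :=
  Subtype.ext (Subtype.ext (trv_comm i j k l h1 h2))

theorem EU_comm3 {d : ℕ} (i j k : Fin d) (hij : i < j) (hjk : j < k) (hik : i < k) :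
    EU d i j hij * EU d j k hjk = EU d i k hik * EU d j k hjk * EU d i j hij :=
  Subtype.ext (Subtype.ext (trv_comm3 i j k hjk.ne hik.ne))


/-- Let `d ≥ 3` and `φ : U_d → GL_m(ℂ)` with `m < d` such that `φ(E_{ij})` is unipotent for all
`i < j`. Then `φ(E_{1d}) = id`. -/
theorem hom_Ud_to_small_GL_unipotent (d m : ℕ) (hd : 3 ≤ d) (hm : m < d)
    (φ : unipotentUpper d →* GL (Fin m) ℂ)
    (hunip : ∀ (i j : Fin d) (h : i < j),
      IsNilpotent ((φ (EU d i j h) : Matrix (Fin m) (Fin m) ℂ) - 1)) :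
    φ (EU d ⟨0, by omega⟩ ⟨d - 1, by omega⟩ (Fin.mk_lt_mk.mpr (by omega))) = 1 := by
  set O : Fin d := ⟨0, by omega⟩ with hOdef
  set D : Fin d := ⟨d - 1, by omega⟩ with hDdef
  have hOD : O < D := Fin.mk_lt_mk.mpr (by omega)
  set n : ℕ := d - 2 with hndef
  have hmid : ∀ k : Fin n, (k : ℕ) + 1 < d := fun k => by omega
  set mid : Fin n → Fin d := fun k => ⟨(k : ℕ) + 1, hmid k⟩ with hmiddef
  have hOmid : ∀ k, O < mid k := fun k => Fin.mk_lt_mk.mpr (by omega)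
  have hmidD : ∀ k : Fin n, mid k < D := fun k => Fin.mk_lt_mk.mpr (by
    have := k.2; omega)
  -- group elements
  set zG : unipotentUpper d := EU d O D hOD with hzGdef
  set AG : Fin n → unipotentUpper d := fun k => EU d O (mid k) (hOmid k) with hAGdef
  set BG : Fin n → unipotentUpper d := fun k => EU d (mid k) D (hmidD k) with hBGdef
  -- group relations
  have gr1 : ∀ k, AG k * BG k = zG * BG k * AG k := fun k =>
    EU_comm3 O (mid k) D (hOmid k) (hmidD k) hOD
  have hmidneO : ∀ k, mid k ≠ O := fun k => Fin.ne_of_val_ne (by simp [hmiddef, hOdef])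
  have hDnemid : ∀ k : Fin n, D ≠ mid k := fun k => Fin.ne_of_val_ne (by
    have := k.2; simp [hmiddef, hDdef]; omega)
  have hDneO : D ≠ O := Fin.ne_of_val_ne (by simp [hDdef, hOdef]; omega)
  have gr2 : ∀ k l, AG k * AG l = AG l * AG k := fun k l =>
    EU_comm O (mid k) O (mid l) (hOmid k) (hOmid l) (hmidneO k) (hmidneO l)
  have gr3 : ∀ k l, BG k * BG l = BG l * BG k := fun k l =>
    EU_comm (mid k) D (mid l) D (hmidD k) (hmidD l) (hDnemid l) (hDnemid k)
  have gr4 : ∀ k l, k ≠ l → AG k * BG l = BG l * AG k := fun k l hkl =>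
    EU_comm O (mid k) (mid l) D (hOmid k) (hmidD l)
      (fun h => hkl (Fin.ext (by simpa [hmiddef, Fin.ext_iff] using h))) hDneO
  have gr5A : ∀ k, zG * AG k = AG k * zG := fun k =>
    EU_comm O D O (mid k) hOD (hOmid k) hDneO (hmidneO k)
  have gr5B : ∀ k, zG * BG k = BG k * zG := fun k =>
    EU_comm O D (mid k) D hOD (hmidD k) (hDnemid k) hDneO
  -- pass to endomorphisms of V = Fin m → ℂ
  set V : Type := Fin m → ℂ with hVdef
  set toE : Matrix (Fin m) (Fin m) ℂ ≃ₐ[ℂ] Module.End ℂ V := Matrix.toLinAlgEquiv' with htoEdef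
  set Φ : unipotentUpper d → Module.End ℂ V :=
    fun g => toE ((φ g : Matrix (Fin m) (Fin m) ℂ)) with hΦdef
  have hΦmul : ∀ g h : unipotentUpper d, Φ (g * h) = Φ g * Φ h := by
    intro g h
    rw [hΦdef]
    simp only [map_mul, Units.val_mul]
  have hΦnil : ∀ (i j : Fin d) (h : i < j), IsNilpotent (Φ (EU d i j h) - 1) := by
    intro i j h
    obtain ⟨q, hq⟩ := hunip i j h
    refine ⟨q, ?_⟩
    have : Φ (EU d i j h) - 1 = toE ((φ (EU d i j h) : Matrix (Fin m) (Fin m) ℂ) - 1) := by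
      rw [hΦdef, map_sub, map_one]
    rw [this, ← map_pow, hq, map_zero]
  set 𝒵 : Module.End ℂ V := Φ zG with h𝒵def
  set 𝒜 : Fin n → Module.End ℂ V := fun k => Φ (AG k) with h𝒜def
  set ℬ : Fin n → Module.End ℂ V := fun k => Φ (BG k) with hℬdef
  have er1 : ∀ k, 𝒜 k * ℬ k = 𝒵 * ℬ k * 𝒜 k := by
    intro k; rw [h𝒜def, hℬdef, h𝒵def, ← hΦmul, ← hΦmul, ← hΦmul, gr1]
  have er2 : ∀ k l, 𝒜 k * 𝒜 l = 𝒜 l * 𝒜 k := by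
    intro k l; rw [h𝒜def, ← hΦmul, ← hΦmul, gr2]
  have er3 : ∀ k l, ℬ k * ℬ l = ℬ l * ℬ k := by
    intro k l; rw [hℬdef, ← hΦmul, ← hΦmul, gr3]
  have er4 : ∀ k l, k ≠ l → 𝒜 k * ℬ l = ℬ l * 𝒜 k := by
    intro k l h; rw [h𝒜def, hℬdef, ← hΦmul, ← hΦmul, gr4 k l h]
  have er5A : ∀ k, 𝒵 * 𝒜 k = 𝒜 k * 𝒵 := by
    intro k; rw [h𝒜def, h𝒵def, ← hΦmul, ← hΦmul, gr5A]
  have er5B : ∀ k, 𝒵 * ℬ k = ℬ k * 𝒵 := by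
    intro k; rw [hℬdef, h𝒵def, ← hΦmul, ← hΦmul, gr5B]
  have hnilA : ∀ k, IsNilpotent (𝒜 k - 1) := fun k => hΦnil _ _ _
  have hnilB : ∀ k, IsNilpotent (ℬ k - 1) := fun k => hΦnil _ _ _
  have hnilZ : IsNilpotent (𝒵 - 1) := hΦnil _ _ _
  -- suffices to show 𝒵 = 1
  suffices h𝒵1 : 𝒵 = 1 by
    have hmat : (φ zG : Matrix (Fin m) (Fin m) ℂ) = 1 := by
      apply toE.injective
      rw [map_one]
      exact h𝒵1
    exact Units.ext (by rw [Units.val_one]; exact hmat)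
  set 𝒩 : Module.End ℂ V := 𝒵 - 1 with h𝒩def
  rw [← sub_eq_zero, ← h𝒩def]
  by_contra h𝒩ne
  -- Commute facts
  classical
  have c𝒩A : ∀ k, Commute (𝒜 k) 𝒩 := fun k =>
    Commute.sub_right (Commute.symm (show Commute 𝒵 (𝒜 k) from er5A k)) (Commute.one_right _)
  have c𝒩B : ∀ k, Commute (ℬ k) 𝒩 := fun k =>
    Commute.sub_right (Commute.symm (show Commute 𝒵 (ℬ k) from er5B k)) (Commute.one_right _)
  -- nilpotency index r
  have hnilN : IsNilpotent 𝒩 := by rw [h𝒩def]; exact hnilZ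
  obtain ⟨q, hq⟩ := hnilN
  have hex : ∃ t, 𝒩 ^ (t + 1) = 0 := ⟨q, by rw [pow_succ, hq, zero_mul]⟩
  set r : ℕ := Nat.find hex with hrdef
  have hr2 : 𝒩 ^ (r + 1) = 0 := Nat.find_spec hex
  have hrpos : 1 ≤ r := by
    rcases Nat.eq_zero_or_pos r with h0 | h1
    · exfalso
      apply h𝒩ne
      have := Nat.find_spec hex
      rw [← hrdef, h0, zero_add, pow_one] at this
      exact this
    · exact h1
  have hr1 : 𝒩 ^ r ≠ 0 := by
    intro h0
    have : r - 1 < r := by omega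
    apply Nat.find_min hex (by rw [← hrdef]; exact this)
    have : r - 1 + 1 = r := by omega
    rw [this, h0]
  -- the subspace W
  set W : Submodule ℂ V := LinearMap.range (𝒩 ^ r) with hWdef
  have hWker : ∀ x ∈ W, 𝒩 x = 0 := by
    rintro x ⟨y, rfl⟩
    have : 𝒩 ((𝒩 ^ r) y) = (𝒩 ^ (r + 1)) y := by
      rw [pow_succ']
      simp [Module.End.mul_apply]
    rw [this, hr2]
    simp
  have hWnontriv : Nontrivial W := by
    have : ∃ y, (𝒩 ^ r) y ≠ 0 := by
      by_contra hc
      push_neg at hc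
      exact hr1 (LinearMap.ext fun y => hc y)
    obtain ⟨y, hy⟩ := this
    exact ⟨⟨⟨(𝒩 ^ r) y, ⟨y, rfl⟩⟩, 0, by simp [Subtype.ext_iff, hy]⟩⟩
  -- the operators map W to itself
  have hmWA : ∀ k, ∀ x ∈ W, 𝒜 k x ∈ W := by
    rintro k x ⟨y, rfl⟩
    exact ⟨𝒜 k y, by rw [← Module.End.mul_apply, ← Module.End.mul_apply,
      ((c𝒩A k).pow_right r).eq]⟩
  have hmWB : ∀ k, ∀ x ∈ W, ℬ k x ∈ W := by
    rintro k x ⟨y, rfl⟩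
    exact ⟨ℬ k y, by rw [← Module.End.mul_apply, ← Module.End.mul_apply,
      ((c𝒩B k).pow_right r).eq]⟩
  have hmWA' : ∀ k, ∀ x ∈ W, (𝒜 k - 1) x ∈ W := by
    intro k x hx
    have : (𝒜 k - 1) x = 𝒜 k x - x := by simp [LinearMap.sub_apply]
    rw [this]
    exact W.sub_mem (hmWA k x hx) hx
  have hmWB' : ∀ k, ∀ x ∈ W, (ℬ k - 1) x ∈ W := by
    intro k x hx
    have : (ℬ k - 1) x = ℬ k x - x := by simp [LinearMap.sub_apply]
    rw [this]
    exact W.sub_mem (hmWB k x hx) hx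
  -- commutation on W (including the pairs (A k, B k))
  have hABW : ∀ k l, ∀ x ∈ W, 𝒜 k (ℬ l x) = ℬ l (𝒜 k x) := by
    intro k l x hx
    by_cases hkl : k = l
    · subst hkl
      have h1 : 𝒜 k (ℬ k x) = (𝒵 * ℬ k * 𝒜 k) x := by
        rw [← er1, Module.End.mul_apply]
      have h2 : (𝒵 * ℬ k * 𝒜 k) x = ℬ k (𝒜 k x) + 𝒩 (ℬ k (𝒜 k x)) := by
        simp only [Module.End.mul_apply, h𝒩def, LinearMap.sub_apply, Module.End.one_apply]
        abel
      have h3 : 𝒩 (ℬ k (𝒜 k x)) = 0 :=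
        hWker _ (hmWB k _ (hmWA k x hx))
      rw [h1, h2, h3, add_zero]
    · rw [← Module.End.mul_apply, ← Module.End.mul_apply, er4 k l hkl]
  have hAAW : ∀ k l x, 𝒜 k (𝒜 l x) = 𝒜 l (𝒜 k x) := by
    intro k l x
    rw [← Module.End.mul_apply, ← Module.End.mul_apply, er2]
  have hBBW : ∀ k l x, ℬ k (ℬ l x) = ℬ l (ℬ k x) := by
    intro k l x
    rw [← Module.End.mul_apply, ← Module.End.mul_apply, er3]
  -- common fixed vector on W via commFix
  set TA : Fin n → Module.End ℂ W := fun k => (𝒜 k - 1).restrict (hmWA' k) with hTAdef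
  set TB : Fin n → Module.End ℂ W := fun k => (ℬ k - 1).restrict (hmWB' k) with hTBdef
  set T : Fin (n + n) → Module.End ℂ W :=
    fun i => Sum.elim TA TB (finSumFinEquiv.symm i) with hTdef
  have hTcomm : ∀ i j : Fin (n + n), ∀ w : W, T i (T j w) = T j (T i w) := by
    have key : ∀ p q : Fin n ⊕ Fin n, ∀ w : W,
        Sum.elim TA TB p (Sum.elim TA TB q w) = Sum.elim TA TB q (Sum.elim TA TB p w) := by
      have VL : ∀ (X Y : Module.End ℂ V) (hX : ∀ x ∈ W, (X - 1) x ∈ W)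
          (hY : ∀ x ∈ W, (Y - 1) x ∈ W),
          (∀ x ∈ W, X (Y x) = Y (X x)) → ∀ w : W,
          (X - 1).restrict hX ((Y - 1).restrict hY w) = (Y - 1).restrict hY ((X - 1).restrict hX w) := by
        intro X Y hX hY hcomm w
        apply Subtype.ext
        simp only [LinearMap.restrict_apply, LinearMap.sub_apply, Module.End.one_apply,
          map_sub]
        rw [hcomm w w.2]
        abel
      rintro (k | k) (l | l) w <;>
        simp only [Sum.elim_inl, Sum.elim_inr, hTAdef, hTBdef]
      · exact VL _ _ (hmWA' k) (hmWA' l) (fun x _ => hAAW k l x) w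
      · exact VL _ _ (hmWA' k) (hmWB' l) (fun x hx => (hABW k l x hx)) w
      · exact VL _ _ (hmWB' k) (hmWA' l) (fun x hx => (hABW l k x hx).symm) w
      · exact VL _ _ (hmWB' k) (hmWB' l) (fun x _ => hBBW k l x) w
    intro i j w
    rw [hTdef]
    exact key _ _ w
  have hTnil : ∀ i, IsNilpotent (T i) := by
    intro i
    rw [hTdef]
    rcases h : finSumFinEquiv.symm i with k | k <;> simp only [h, Sum.elim_inl, Sum.elim_inr]
    · rw [hTAdef]; exact Module.End.isNilpotent.restrict _ (hnilA k)
    · rw [hTBdef]; exact Module.End.isNilpotent.restrict _ (hnilB k)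
  obtain ⟨v, hv0, hvT⟩ := commFix ℂ (n + n) W T hTcomm hTnil
  set e₀ : V := (v : V) with he₀def
  have he₀ne : e₀ ≠ 0 := fun h => hv0 (Subtype.ext h)
  have he₀W : e₀ ∈ W := v.2
  have he₀K : 𝒩 e₀ = 0 := hWker _ he₀W
  have hfix : ∀ p : Fin n ⊕ Fin n, Sum.elim TA TB p v = 0 := by
    intro p
    have := hvT (finSumFinEquiv p)
    simp only [hTdef] at this
    rwa [Equiv.symm_apply_apply] at this
  have hfixA : ∀ k, 𝒜 k e₀ = e₀ := by
    intro k
    have := congrArg Subtype.val (hfix (Sum.inl k))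
    simp only [Sum.elim_inl, hTAdef, LinearMap.restrict_apply, LinearMap.sub_apply,
      Module.End.one_apply, ZeroMemClass.coe_zero] at this
    rw [← he₀def] at this
    exact sub_eq_zero.mp this
  have hfixB : ∀ k, ℬ k e₀ = e₀ := by
    intro k
    have := congrArg Subtype.val (hfix (Sum.inr k))
    simp only [Sum.elim_inr, hTBdef, LinearMap.restrict_apply, LinearMap.sub_apply,
      Module.End.one_apply, ZeroMemClass.coe_zero] at this
    rw [← he₀def] at this
    exact sub_eq_zero.mp this
  -- a preimage of e₀ under 𝒩
  obtain ⟨y, hy⟩ := he₀W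
  set v₁ : V := (𝒩 ^ (r - 1)) y with hv₁def
  have hv₁ : 𝒩 v₁ = e₀ := by
    rw [hv₁def, ← Module.End.mul_apply, ← pow_succ']
    have hr' : r - 1 + 1 = r := by omega
    rw [hr', hy]
  -- the subspace K = ker 𝒩
  set K : Submodule ℂ V := LinearMap.ker 𝒩 with hKdef
  have hKtop : K ≠ ⊤ := fun h => h𝒩ne (LinearMap.ker_eq_top.mp h)
  have hrankK : Module.finrank ℂ K < m := by
    have h1 : Module.finrank ℂ K < Module.finrank ℂ V :=
      Submodule.finrank_lt (lt_top_iff_ne_top.mpr hKtop).ne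
    have h2 : Module.finrank ℂ V = m := Module.finrank_fin_fun ℂ
    omega
  -- commutation with 𝒩
  have c𝒩A' : ∀ k, Commute (𝒜 k - 1) 𝒩 := fun k => (c𝒩A k).sub_left (Commute.one_left 𝒩)
  have c𝒩B' : ∀ k, Commute (ℬ k - 1) 𝒩 := fun k => (c𝒩B k).sub_left (Commute.one_left 𝒩)
  have hNA : ∀ k (x : V), 𝒩 (𝒜 k x) = 𝒜 k (𝒩 x) := by
    intro k x
    rw [← Module.End.mul_apply, ← Module.End.mul_apply, ← (c𝒩A k).eq]
  have hNB : ∀ k (x : V), 𝒩 (ℬ k x) = ℬ k (𝒩 x) := by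
    intro k x
    rw [← Module.End.mul_apply, ← Module.End.mul_apply, ← (c𝒩B k).eq]
  -- operators preserve K
  have hmKA : ∀ k, ∀ x ∈ K, (𝒜 k - 1) x ∈ K := by
    intro k x hx
    rw [hKdef, LinearMap.mem_ker] at hx ⊢
    rw [← Module.End.mul_apply, ← (c𝒩A' k).eq, Module.End.mul_apply, hx, map_zero]
  have hmKB : ∀ k, ∀ x ∈ K, (ℬ k - 1) x ∈ K := by
    intro k x hx
    rw [hKdef, LinearMap.mem_ker] at hx ⊢
    rw [← Module.End.mul_apply, ← (c𝒩B' k).eq, Module.End.mul_apply, hx, map_zero]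
  -- commutation of 𝒜 and ℬ on K
  have hABK : ∀ k l, ∀ x ∈ K, 𝒜 k (ℬ l x) = ℬ l (𝒜 k x) := by
    intro k l x hx
    by_cases hkl : k = l
    · subst hkl
      rw [hKdef, LinearMap.mem_ker] at hx
      have h1 : 𝒜 k (ℬ k x) = (𝒵 * ℬ k * 𝒜 k) x := by
        rw [← er1, Module.End.mul_apply]
      have h2 : (𝒵 * ℬ k * 𝒜 k) x = ℬ k (𝒜 k x) + 𝒩 (ℬ k (𝒜 k x)) := by
        simp only [Module.End.mul_apply, h𝒩def, LinearMap.sub_apply, Module.End.one_apply]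
        abel
      have h3 : 𝒩 (ℬ k (𝒜 k x)) = 0 := by
        rw [hNB, hNA, hx, map_zero, map_zero]
      rw [h1, h2, h3, add_zero]
    · rw [← Module.End.mul_apply, ← Module.End.mul_apply, er4 k l hkl]
  -- the new system on K
  have heKmem : e₀ ∈ K := LinearMap.mem_ker.mpr he₀K
  have haK : ∀ k, 𝒜 k v₁ - v₁ ∈ K := by
    intro k
    rw [hKdef, LinearMap.mem_ker, map_sub, hNA, hv₁, hfixA, sub_self]
  have hbK : ∀ k, ℬ k v₁ - v₁ ∈ K := by
    intro k
    rw [hKdef, LinearMap.mem_ker, map_sub, hNB, hv₁, hfixB, sub_self]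
  set ξA : Fin n → Module.End ℂ K := fun k => (𝒜 k - 1).restrict (hmKA k) with hξAdef
  set ξB : Fin n → Module.End ℂ K := fun k => (ℬ k - 1).restrict (hmKB k) with hξBdef
  set aa : Fin n → K := fun k => ⟨𝒜 k v₁ - v₁, haK k⟩ with haadef
  set bb : Fin n → K := fun k => ⟨ℬ k v₁ - v₁, hbK k⟩ with hbbdef
  set ee : K := ⟨e₀, heKmem⟩ with heedef
  -- a helper for commutators of (X - 1)
  have comm_sub : ∀ (X Y : Module.End ℂ V) (x : V), X (Y x) = Y (X x) →
      (X - 1) ((Y - 1) x) = (Y - 1) ((X - 1) x) := by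
    intro X Y x h
    simp only [LinearMap.sub_apply, Module.End.one_apply, map_sub]
    rw [h]
    abel
  -- apply the core lemma
  have hcore := core ℂ n K ξA ξB aa bb ee
    (by
      intro h
      exact he₀ne (by simpa [heedef, Subtype.ext_iff] using h))
    (by
      intro k l x
      apply Subtype.ext
      simp only [hξAdef, LinearMap.restrict_apply]
      exact comm_sub _ _ _ (hAAW k l x))
    (by
      intro k l x
      apply Subtype.ext
      simp only [hξBdef, LinearMap.restrict_apply]
      exact comm_sub _ _ _ (hBBW k l x))
    (by
      intro k l x
      apply Subtype.ext
      simp only [hξAdef, hξBdef, LinearMap.restrict_apply]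
      exact comm_sub _ _ _ (hABK k l x x.2))
    (by
      intro k
      apply Subtype.ext
      simp only [hξAdef, LinearMap.restrict_apply, heedef, LinearMap.sub_apply,
        Module.End.one_apply, ZeroMemClass.coe_zero]
      rw [hfixA, sub_self])
    (by
      intro k
      apply Subtype.ext
      simp only [hξBdef, LinearMap.restrict_apply, heedef, LinearMap.sub_apply,
        Module.End.one_apply, ZeroMemClass.coe_zero]
      rw [hfixB, sub_self])
    (by
      intro k l
      apply Subtype.ext
      simp only [hξAdef, haadef, LinearMap.restrict_apply, LinearMap.sub_apply,
        Module.End.one_apply, map_sub]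
      rw [hAAW k l v₁]
      abel)
    (by
      intro k l
      apply Subtype.ext
      simp only [hξBdef, hbbdef, LinearMap.restrict_apply, LinearMap.sub_apply,
        Module.End.one_apply, map_sub]
      rw [hBBW k l v₁]
      abel)
    (by
      intro k l
      apply Subtype.ext
      simp only [hξAdef, hξBdef, haadef, hbbdef, heedef, LinearMap.restrict_apply,
        Submodule.coe_add, apply_ite (Subtype.val), ZeroMemClass.coe_zero,
        LinearMap.sub_apply, Module.End.one_apply, map_sub]
      by_cases hkl : k = l
      · subst hkl
        rw [if_pos rfl]
        have h𝒜ℬ : 𝒜 k (ℬ k v₁) = ℬ k (𝒜 k v₁) + e₀ := by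
          have h1 := congrFun (congrArg DFunLike.coe (er1 k)) v₁
          simp only [Module.End.mul_apply] at h1
          have h2 : 𝒵 (ℬ k (𝒜 k v₁)) = ℬ k (𝒜 k v₁) + 𝒩 (ℬ k (𝒜 k v₁)) := by
            simp only [h𝒩def, LinearMap.sub_apply, Module.End.one_apply]
            abel
          have h3 : 𝒩 (ℬ k (𝒜 k v₁)) = e₀ := by
            rw [hNB, hNA, hv₁, hfixA, hfixB]
          rw [h1, h2, h3]
        rw [h𝒜ℬ]
        abel
      · rw [if_neg hkl]
        have hcl : 𝒜 k (ℬ l v₁) = ℬ l (𝒜 k v₁) := by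
          have h1 := congrFun (congrArg DFunLike.coe (er4 k l hkl)) v₁
          simpa only [Module.End.mul_apply] using h1
        rw [hcl]
        abel)
  omega
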